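/- Let S₁ be a finite set and ℓ₂ ≥ 1. Let (F,ν_F,ξ_F) and (H,ν_H,ξ_H) be finite coloured graphs with vertex colourings into S₁ and injective edge colourings into {1,…,ℓ₂}. If (F,ν_F,ξ_F) and (H,ν_H,ξ_H) are not isomorphic as coloured graphs, then there exists a finite coloured graph (G,ν_G,ξ_G) with vertex colouring into S₁ and injective edge colouring into {1,…,ℓ₂} such that #Hom((F,ν_F,ξ_F) → (G,ν_G,ξ_G)) ≠ #Hom((H,ν_H,ξ_H) → (G,ν_G,ξ_G)). -/

import Mathlib

/-- `φ` is a homomorphism of coloured graphs: a graph homomorphism preserving vertex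
colours and edge colours. -/
def IsColHom {V₁ V₂ S₁ S₂ : Type*} (G₁ : SimpleGraph V₁) (ν₁ : V₁ → S₁) (ξ₁ : Sym2 V₁ → S₂)
    (G₂ : SimpleGraph V₂) (ν₂ : V₂ → S₁) (ξ₂ : Sym2 V₂ → S₂) (φ : V₁ → V₂) : Prop :=
  (∀ u v, G₁.Adj u v → G₂.Adj (φ u) (φ v)) ∧ (∀ v, ν₂ (φ v) = ν₁ v) ∧
    ∀ u v, G₁.Adj u v → ξ₂ (s(φ u, φ v)) = ξ₁ (s(u, v))

section ColHomHelpers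

variable {V W X S R : Type*}

lemma colHom_id (G : SimpleGraph V) (ν : V → S) (ξ : Sym2 V → R) :
    IsColHom G ν ξ G ν ξ id :=
  ⟨fun _ _ h => h, fun _ => rfl, fun _ _ _ => rfl⟩

lemma colHom_comp {G₁ : SimpleGraph V} {G₂ : SimpleGraph W} {G₃ : SimpleGraph X}
    {ν₁ : V → S} {ξ₁ : Sym2 V → R} {ν₂ : W → S} {ξ₂ : Sym2 W → R}
    {ν₃ : X → S} {ξ₃ : Sym2 X → R} {φ : V → W} {ψ : W → X}
    (h1 : IsColHom G₁ ν₁ ξ₁ G₂ ν₂ ξ₂ φ) (h2 : IsColHom G₂ ν₂ ξ₂ G₃ ν₃ ξ₃ ψ) :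
    IsColHom G₁ ν₁ ξ₁ G₃ ν₃ ξ₃ (ψ ∘ φ) := by
  refine ⟨fun u v h => h2.1 _ _ (h1.1 u v h), fun v => by rw [Function.comp_apply, h2.2.1, h1.2.1],
    fun u v h => ?_⟩
  rw [Function.comp_apply, Function.comp_apply, h2.2.2 _ _ (h1.1 u v h), h1.2.2 u v h]

/-- hom counts agree if the sources are isomorphic coloured graphs -/
lemma homCard_congr_source {G₁ : SimpleGraph V} {G₂ : SimpleGraph W} {K : SimpleGraph X}
    {ν₁ : V → S} {ξ₁ : Sym2 V → R} {ν₂ : W → S} {ξ₂ : Sym2 W → R}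
    {νK : X → S} {ξK : Sym2 X → R} (e : V ≃ W)
    (he : IsColHom G₁ ν₁ ξ₁ G₂ ν₂ ξ₂ e) (he' : IsColHom G₂ ν₂ ξ₂ G₁ ν₁ ξ₁ e.symm) :
    Nat.card {φ : V → X // IsColHom G₁ ν₁ ξ₁ K νK ξK φ} =
      Nat.card {φ : W → X // IsColHom G₂ ν₂ ξ₂ K νK ξK φ} := by
  refine Nat.card_congr ⟨fun φ => ⟨φ.1 ∘ e.symm, colHom_comp he' φ.2⟩,
    fun ψ => ⟨ψ.1 ∘ e, colHom_comp he ψ.2⟩, fun φ => ?_, fun ψ => ?_⟩ <;>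
  · ext v; simp

/-- transporting the target along an equiv -/
lemma homCard_congr_target {K : SimpleGraph X} {νK : X → S} {ξK : Sym2 X → R}
    {G₁ : SimpleGraph V} {ν₁ : V → S} {ξ₁ : Sym2 V → R} (e : V ≃ W) :
    Nat.card {φ : X → V // IsColHom K νK ξK G₁ ν₁ ξ₁ φ} =
      Nat.card {φ : X → W // IsColHom K νK ξK (G₁.comap ⇑e.symm) (ν₁ ∘ ⇑e.symm)
        (ξ₁ ∘ Sym2.map ⇑e.symm) φ} := by
  refine Nat.card_congr ⟨fun φ => ⟨⇑e ∘ φ.1, ?_⟩, fun ψ => ⟨⇑e.symm ∘ ψ.1, ?_⟩,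
    fun φ => ?_, fun ψ => ?_⟩
  · obtain ⟨h1, h2, h3⟩ := φ.2
    refine ⟨fun u v h => by simpa using h1 u v h, fun v => by simpa using h2 v,
      fun u v h => ?_⟩
    have := h3 u v h
    simpa using this
  · obtain ⟨h1, h2, h3⟩ := ψ.2
    refine ⟨fun u v h => by simpa using h1 u v h, fun v => by simpa using h2 v,
      fun u v h => ?_⟩
    have := h3 u v h
    simpa using this
  · ext v; simp
  · ext v; simp

lemma injOn_comap_target {G₁ : SimpleGraph V} {ξ₁ : Sym2 V → R} (e : V ≃ W)
    (h : Set.InjOn ξ₁ G₁.edgeSet) :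
    Set.InjOn (ξ₁ ∘ Sym2.map ⇑e.symm) (G₁.comap ⇑e.symm).edgeSet := by
  intro s hs t ht hst
  have hs' : Sym2.map (⇑e.symm) s ∈ G₁.edgeSet := by
    induction s using Sym2.ind with
    | _ a b => simpa using hs
  have ht' : Sym2.map (⇑e.symm) t ∈ G₁.edgeSet := by
    induction t using Sym2.ind with
    | _ a b => simpa using ht
  have := h hs' ht' hst
  exact Sym2.map.injective e.symm.injective this

/-- packaging: transport a distinguishing target to one on `Fin n` -/
lemma finalize {V_F V_H S W : Type*} [Fintype W] {ℓ₂ : ℕ}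
    (F : SimpleGraph V_F) (νF : V_F → S) (ξF : Sym2 V_F → Fin ℓ₂)
    (H : SimpleGraph V_H) (νH : V_H → S) (ξH : Sym2 V_H → Fin ℓ₂)
    (G : SimpleGraph W) (νG : W → S) (ξG : Sym2 W → Fin ℓ₂)
    (hG : Set.InjOn ξG G.edgeSet)
    (hne : Nat.card {φ : V_F → W // IsColHom F νF ξF G νG ξG φ} ≠
      Nat.card {φ : V_H → W // IsColHom H νH ξH G νG ξG φ}) :
    ∃ (n : ℕ) (G' : SimpleGraph (Fin n)) (νG' : Fin n → S) (ξG' : Sym2 (Fin n) → Fin ℓ₂),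
      Set.InjOn ξG' G'.edgeSet ∧
        Nat.card {φ : V_F → Fin n // IsColHom F νF ξF G' νG' ξG' φ} ≠
          Nat.card {φ : V_H → Fin n // IsColHom H νH ξH G' νG' ξG' φ} := by
  let e := Fintype.equivFin W
  refine ⟨Fintype.card W, G.comap ⇑e.symm, νG ∘ ⇑e.symm, ξG ∘ Sym2.map ⇑e.symm,
    injOn_comap_target e hG, ?_⟩
  rw [← homCard_congr_target e, ← homCard_congr_target e]
  exact hne

lemma edge_fix {F : SimpleGraph V} {H : SimpleGraph W}
    {νF : V → S} {ξF : Sym2 V → R} {νH : W → S} {ξH : Sym2 W → R} {φ : V → W} {ψ : W → V}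
    (hF : Set.InjOn ξF F.edgeSet)
    (hφ : IsColHom F νF ξF H νH ξH φ) (hψ : IsColHom H νH ξH F νF ξF ψ)
    {u v : V} (h : F.Adj u v) : s(ψ (φ u), ψ (φ v)) = s(u, v) := by
  have hadj : F.Adj (ψ (φ u)) (ψ (φ v)) := hψ.1 _ _ (hφ.1 _ _ h)
  have hc : ξF (s(ψ (φ u), ψ (φ v))) = ξF (s(u, v)) := by
    rw [hψ.2.2 _ _ (hφ.1 _ _ h), hφ.2.2 _ _ h]
  exact hF hadj h hc

lemma sigma_invol {F : SimpleGraph V} {H : SimpleGraph W}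
    {νF : V → S} {ξF : Sym2 V → R} {νH : W → S} {ξH : Sym2 W → R} {φ : V → W} {ψ : W → V}
    (hF : Set.InjOn ξF F.edgeSet)
    (hφ : IsColHom F νF ξF H νH ξH φ) (hψ : IsColHom H νH ξH F νF ξF ψ)
    {u v : V} (h : F.Adj u v) : ψ (φ (ψ (φ u))) = u := by
  have h1 := edge_fix hF hφ hψ h
  rw [Sym2.eq_iff] at h1
  rcases h1 with ⟨h2, _⟩ | ⟨h2, h3⟩
  · rw [h2, h2]
  · rw [h2, h3]

/-- the core rigidity lemma: mutually homomorphic injectively-edge-coloured graphs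
have isomorphic non-isolated parts -/
lemma core_iso {F : SimpleGraph V} {H : SimpleGraph W}
    {νF : V → S} {ξF : Sym2 V → R} {νH : W → S} {ξH : Sym2 W → R} {φ : V → W} {ψ : W → V}
    (hF : Set.InjOn ξF F.edgeSet) (hH : Set.InjOn ξH H.edgeSet)
    (hφ : IsColHom F νF ξF H νH ξH φ) (hψ : IsColHom H νH ξH F νF ξF ψ) :
    ∃ e : {v : V // ∃ u, F.Adj v u} ≃ {w : W // ∃ x, H.Adj w x},
      (∀ v, (e v).val = φ v.val) ∧ (∀ w, (e.symm w).val = ψ (φ (ψ w.val))) ∧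
      IsColHom (F.comap Subtype.val) (νF ∘ Subtype.val) (ξF ∘ Sym2.map Subtype.val)
        (H.comap Subtype.val) (νH ∘ Subtype.val) (ξH ∘ Sym2.map Subtype.val) e ∧
      IsColHom (H.comap Subtype.val) (νH ∘ Subtype.val) (ξH ∘ Sym2.map Subtype.val)
        (F.comap Subtype.val) (νF ∘ Subtype.val) (ξF ∘ Sym2.map Subtype.val) e.symm := by
  have hg : IsColHom H νH ξH F νF ξF (ψ ∘ (φ ∘ ψ)) :=
    colHom_comp (colHom_comp hψ hφ) hψ
  refine ⟨⟨fun v => ⟨φ v.1, by obtain ⟨u, hu⟩ := v.2; exact ⟨φ u, hφ.1 _ _ hu⟩⟩,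
    fun w => ⟨ψ (φ (ψ w.1)), by obtain ⟨x, hx⟩ := w.2; exact ⟨ψ (φ (ψ x)), hg.1 _ _ hx⟩⟩,
    fun v => ?_, fun w => ?_⟩, fun v => rfl, fun w => rfl, ?_, ?_⟩
  · obtain ⟨u, hu⟩ := v.2
    exact Subtype.ext (sigma_invol hF hφ hψ hu)
  · obtain ⟨x, hx⟩ := w.2
    exact Subtype.ext (sigma_invol hH hψ hφ hx)
  · refine ⟨fun u v h => ?_, fun v => hφ.2.1 v.1, fun u v h => ?_⟩
    · simp only [SimpleGraph.comap_adj] at h ⊢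
      exact hφ.1 _ _ h
    · simp only [SimpleGraph.comap_adj] at h
      simp only [Function.comp_apply, Sym2.map_pair_eq]
      exact hφ.2.2 _ _ h
  · refine ⟨fun u v h => ?_, fun v => hg.2.1 v.1, fun u v h => ?_⟩
    · simp only [SimpleGraph.comap_adj] at h ⊢
      exact hg.1 _ _ h
    · simp only [SimpleGraph.comap_adj] at h
      simp only [Function.comp_apply, Sym2.map_pair_eq]
      exact hg.2.2 _ _ h

open Classical in
/-- hom counts factor through the non-isolated part and the isolated vertices -/
lemma homCard_decomp (F : SimpleGraph V) (G : SimpleGraph X)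
    (νF : V → S) (ξF : Sym2 V → R) (νG : X → S) (ξG : Sym2 X → R) :
    Nat.card {φ : V → X // IsColHom F νF ξF G νG ξG φ} =
      Nat.card {ψ : {v : V // ∃ u, F.Adj v u} → X //
          IsColHom (F.comap Subtype.val) (νF ∘ Subtype.val) (ξF ∘ Sym2.map Subtype.val)
            G νG ξG ψ} *
        Nat.card ((v : {v : V // ¬ ∃ u, F.Adj v u}) → {x : X // νG x = νF v.val}) := by
  rw [← Nat.card_prod]
  refine Nat.card_congr ⟨fun φ => ⟨⟨fun v => φ.1 v.1, ?_⟩, fun v => ⟨φ.1 v.1, φ.2.2.1 v.1⟩⟩,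
    fun p => ⟨fun v => if h : ∃ u, F.Adj v u then p.1.1 ⟨v, h⟩ else (p.2 ⟨v, h⟩).val, ?_⟩,
    fun φ => ?_, fun p => ?_⟩
  · refine ⟨fun u v h => φ.2.1 _ _ (by simpa using h), fun v => φ.2.2.1 v.1,
      fun u v h => ?_⟩
    simp only [SimpleGraph.comap_adj] at h
    simp only [Function.comp_apply, Sym2.map_pair_eq]
    exact φ.2.2.2 _ _ h
  · have key : ∀ (u : V) (h : ∃ w, F.Adj u w),
        (if h' : ∃ w, F.Adj u w then p.1.1 ⟨u, h'⟩ else (p.2 ⟨u, h'⟩).val) = p.1.1 ⟨u, h⟩ := by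
      intro u h; rw [dif_pos h]
    refine ⟨fun u v h => ?_, fun v => ?_, fun u v h => ?_⟩
    · have hu : ∃ w, F.Adj u w := ⟨v, h⟩
      have hv : ∃ w, F.Adj v w := ⟨u, h.symm⟩
      dsimp only
      rw [key u hu, key v hv]
      exact p.1.2.1 ⟨u, hu⟩ ⟨v, hv⟩ (by simpa using h)
    · by_cases h : ∃ w, F.Adj v w
      · dsimp only; rw [key v h]; exact p.1.2.2.1 ⟨v, h⟩
      · dsimp only; rw [dif_neg h]; exact (p.2 ⟨v, h⟩).2
    · have hu : ∃ w, F.Adj u w := ⟨v, h⟩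
      have hv : ∃ w, F.Adj v w := ⟨u, h.symm⟩
      dsimp only
      rw [key u hu, key v hv]
      have := p.1.2.2.2 ⟨u, hu⟩ ⟨v, hv⟩ (by simpa using h)
      simpa using this
  · ext v
    by_cases h : ∃ u, F.Adj v u
    · simp [dif_pos h]
    · simp [dif_neg h]
  · refine Prod.ext ?_ ?_
    · ext v
      simp [dif_pos v.2]
    · ext v
      simp [dif_neg v.2]

open Classical in
lemma factorization_prod_primes {ι : Type*} [Fintype ι] (f : ι → S) (p : S → ℕ)
    (hp : ∀ t, (p t).Prime) (hinj : Function.Injective p) (s : S) :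
    (∏ v : ι, p (f v)).factorization (p s) = Nat.card {v : ι // f v = s} := by
  rw [Nat.factorization_prod (fun x _ => (hp (f x)).pos.ne')]
  rw [Finsupp.finset_sum_apply]
  have : ∀ v : ι, ((p (f v)).factorization) (p s) = if f v = s then 1 else 0 := by
    intro v
    rw [(hp (f v)).factorization, Finsupp.single_apply]
    simp [hinj.eq_iff]
  rw [Finset.sum_congr rfl (fun v _ => this v)]
  rw [← Finset.card_filter]
  rw [Nat.card_eq_fintype_card, Fintype.card_subtype]

open Classical in
lemma prod_primes_ne {ι κ : Type*} [Fintype ι] [Fintype κ] (f : ι → S) (g : κ → S)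
    (p : S → ℕ) (hp : ∀ t, (p t).Prime) (hinj : Function.Injective p) (s : S)
    (h : Nat.card {v : ι // f v = s} ≠ Nat.card {w : κ // g w = s}) :
    ∏ v : ι, p (f v) ≠ ∏ w : κ, p (g w) := by
  intro heq
  apply h
  rw [← factorization_prod_primes f p hp hinj s, ← factorization_prod_primes g p hp hinj s, heq]

open Classical in
lemma colour_bij {A B : Type*} [Finite A] [Finite B] (f : A → S) (g : B → S)
    (h : ∀ t, Nat.card {a : A // f a = t} = Nat.card {b : B // g b = t}) :
    ∃ e : A ≃ B, ∀ a, g (e a) = f a := by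
  have hb : ∀ t : S, Nonempty ({a : A // f a = t} ≃ {b : B // g b = t}) := fun t =>
    Finite.card_eq.mp (h t)
  let b : ∀ t : S, {a : A // f a = t} ≃ {b : B // g b = t} := fun t => (hb t).some
  refine ⟨(Equiv.sigmaFiberEquiv f).symm.trans ((Equiv.sigmaCongrRight b).trans
    (Equiv.sigmaFiberEquiv g)), fun a => ?_⟩
  exact ((b (f a)) ⟨a, rfl⟩).2

open Classical in
lemma glue_iso {F : SimpleGraph V} {H : SimpleGraph W}
    {νF : V → S} {ξF : Sym2 V → R} {νH : W → S} {ξH : Sym2 W → R} {φ : V → W} {ψ : W → V}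
    (hφ : IsColHom F νF ξF H νH ξH φ) (hψ : IsColHom H νH ξH F νF ξF ψ)
    (e'' : {v : V // ∃ u, F.Adj v u} ≃ {w : W // ∃ x, H.Adj w x})
    (h1 : ∀ v, (e'' v).val = φ v.val) (h2 : ∀ w, (e''.symm w).val = ψ (φ (ψ w.val)))
    (eI : {v : V // ¬∃ u, F.Adj v u} ≃ {w : W // ¬∃ x, H.Adj w x})
    (hI : ∀ v, νH (eI v).val = νF v.val) :
    ∃ e : V ≃ W, IsColHom F νF ξF H νH ξH e ∧ IsColHom H νH ξH F νF ξF e.symm := by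
  have hg : IsColHom H νH ξH F νF ξF (ψ ∘ (φ ∘ ψ)) := colHom_comp (colHom_comp hψ hφ) hψ
  let P : V → Prop := fun v => ∃ u, F.Adj v u
  let Q : W → Prop := fun w => ∃ x, H.Adj w x
  let e : V ≃ W := (Equiv.sumCompl P).symm.trans ((Equiv.sumCongr e'' eI).trans
    (Equiv.sumCompl Q))
  have hev_pos : ∀ v (h : P v), e v = φ v := by
    intro v h
    show (Equiv.sumCompl Q) ((Equiv.sumCongr e'' eI) ((Equiv.sumCompl P).symm v)) = φ v
    rw [Equiv.sumCompl_symm_apply_of_pos (p := P) h]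
    simp [h1 ⟨v, h⟩]
  have hev_neg : ∀ v (h : ¬ P v), e v = (eI ⟨v, h⟩).val := by
    intro v h
    show (Equiv.sumCompl Q) ((Equiv.sumCongr e'' eI) ((Equiv.sumCompl P).symm v)) = _
    rw [Equiv.sumCompl_symm_apply_of_neg (p := P) h]
    simp
  have hsym_pos : ∀ x (h : Q x), e.symm x = ψ (φ (ψ x)) := by
    intro x h
    show (Equiv.sumCompl P) ((Equiv.sumCongr e'' eI).symm ((Equiv.sumCompl Q).symm x)) = _
    rw [Equiv.sumCompl_symm_apply_of_pos (p := Q) h]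
    simpa using h2 ⟨x, h⟩
  have hsym_neg : ∀ x (h : ¬ Q x), e.symm x = (eI.symm ⟨x, h⟩).val := by
    intro x h
    show (Equiv.sumCompl P) ((Equiv.sumCongr e'' eI).symm ((Equiv.sumCompl Q).symm x)) = _
    rw [Equiv.sumCompl_symm_apply_of_neg (p := Q) h]
    simp
  refine ⟨e, ⟨fun u v h => ?_, fun v => ?_, fun u v h => ?_⟩,
    ⟨fun x y h => ?_, fun x => ?_, fun x y h => ?_⟩⟩
  · rw [hev_pos u ⟨v, h⟩, hev_pos v ⟨u, h.symm⟩]; exact hφ.1 _ _ h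
  · by_cases h : P v
    · rw [hev_pos v h]; exact hφ.2.1 v
    · rw [hev_neg v h]; exact hI ⟨v, h⟩
  · rw [hev_pos u ⟨v, h⟩, hev_pos v ⟨u, h.symm⟩]; exact hφ.2.2 _ _ h
  · rw [hsym_pos x ⟨y, h⟩, hsym_pos y ⟨x, h.symm⟩]; exact hg.1 _ _ h
  · by_cases h : Q x
    · rw [hsym_pos x h]; exact hg.2.1 x
    · rw [hsym_neg x h]
      have := hI (eI.symm ⟨x, h⟩)
      rw [Equiv.apply_symm_apply] at this
      exact this.symm
  · rw [hsym_pos x ⟨y, h⟩, hsym_pos y ⟨x, h.symm⟩]; exact hg.2.2 _ _ h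

end ColHomHelpers

set_option maxHeartbeats 2000000 in
/-- if two finite coloured graphs with injective edge colourings are not
isomorphic as coloured graphs, then some finite coloured graph (with injective edge
colouring) distinguishes them by homomorphism counts. -/
theorem stmt10 {V_F V_H S₁ : Type*} [Fintype V_F] [Fintype V_H] [Finite S₁]
    (ℓ₂ : ℕ) (hℓ : 1 ≤ ℓ₂)
    (F : SimpleGraph V_F) (νF : V_F → S₁) (ξF : Sym2 V_F → Fin ℓ₂)
    (H : SimpleGraph V_H) (νH : V_H → S₁) (ξH : Sym2 V_H → Fin ℓ₂)
    (hF : Set.InjOn ξF F.edgeSet) (hH : Set.InjOn ξH H.edgeSet)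
    (hnoiso : ¬ ∃ e : V_F ≃ V_H,
        IsColHom F νF ξF H νH ξH e ∧ IsColHom H νH ξH F νF ξF e.symm) :
    ∃ (n : ℕ) (G : SimpleGraph (Fin n)) (νG : Fin n → S₁) (ξG : Sym2 (Fin n) → Fin ℓ₂),
      Set.InjOn ξG G.edgeSet ∧
        Nat.card {φ : V_F → Fin n // IsColHom F νF ξF G νG ξG φ} ≠
          Nat.card {φ : V_H → Fin n // IsColHom H νH ξH G νG ξG φ} := by
  classical
  by_cases h1 : Nat.card {φ : V_F → V_F // IsColHom F νF ξF F νF ξF φ} =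
      Nat.card {φ : V_H → V_F // IsColHom H νH ξH F νF ξF φ}
  swap
  · exact finalize F νF ξF H νH ξH F νF ξF hF h1
  by_cases h2 : Nat.card {φ : V_F → V_H // IsColHom F νF ξF H νH ξH φ} =
      Nat.card {φ : V_H → V_H // IsColHom H νH ξH H νH ξH φ}
  swap
  · exact finalize F νF ξF H νH ξH H νH ξH hH h2
  -- extract homomorphisms in both directions
  have hposF : 0 < Nat.card {φ : V_F → V_F // IsColHom F νF ξF F νF ξF φ} := by
    haveI : Nonempty {φ : V_F → V_F // IsColHom F νF ξF F νF ξF φ} := ⟨⟨id, colHom_id F νF ξF⟩⟩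
    exact Nat.card_pos
  have hposH : 0 < Nat.card {φ : V_H → V_H // IsColHom H νH ξH H νH ξH φ} := by
    haveI : Nonempty {φ : V_H → V_H // IsColHom H νH ξH H νH ξH φ} := ⟨⟨id, colHom_id H νH ξH⟩⟩
    exact Nat.card_pos
  rw [h1] at hposF
  rw [← h2] at hposH
  obtain ⟨⟨ψ, hψ⟩⟩ := (Nat.card_pos_iff.mp hposF).1
  obtain ⟨⟨φ, hφ⟩⟩ := (Nat.card_pos_iff.mp hposH).1
  obtain ⟨e'', he1, he2, heF, heH⟩ := core_iso hF hH hφ hψ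
  by_cases hk : ∀ t, Nat.card {v : {v : V_F // ¬∃ u, F.Adj v u} // νF v.val = t} =
      Nat.card {w : {w : V_H // ¬∃ x, H.Adj w x} // νH w.val = t}
  · obtain ⟨eI, hI⟩ := colour_bij (fun v : {v : V_F // ¬∃ u, F.Adj v u} => νF v.val)
      (fun w : {w : V_H // ¬∃ x, H.Adj w x} => νH w.val) hk
    exact absurd (glue_iso hφ hψ e'' he1 he2 eI hI) hnoiso
  push_neg at hk
  obtain ⟨s, hs⟩ := hk
  -- prime-counting target
  letI : Fintype S₁ := Fintype.ofFinite S₁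
  set base : S₁ → ℕ := fun t => Nat.card {v : V_F // νF v = t} with hbase
  let idx : S₁ → ℕ := fun t => ((Fintype.equivFin S₁) t).val
  have hidx : Function.Injective idx := fun a b h =>
    (Fintype.equivFin S₁).injective (Fin.ext h)
  let B : ℕ := ∑ t : S₁, base t
  have hbB : ∀ t, base t ≤ B := fun t =>
    Finset.single_le_sum (fun _ _ => Nat.zero_le _) (Finset.mem_univ t)
  have hnth : StrictMono (Nat.nth Nat.Prime) := Nat.nth_strictMono Nat.infinite_setOf_prime
  let p : S₁ → ℕ := fun t => Nat.nth Nat.Prime (B + idx t)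
  have hp : ∀ t, (p t).Prime := fun t => Nat.prime_nth_prime _
  have hpinj : Function.Injective p := fun a b h => hidx (by
    have := hnth.injective h
    omega)
  have hple : ∀ t, base t ≤ p t := fun t =>
    le_trans (le_trans (hbB t) (Nat.le_add_right _ _)) hnth.le_apply
  let m : S₁ → ℕ := fun t => p t - base t
  -- the target coloured graph
  let W := V_F ⊕ (Σ t : S₁, Fin (m t))
  let G : SimpleGraph W := F.map (⟨Sum.inl, Sum.inl_injective⟩ : V_F ↪ W)
  let νG : W → S₁ := Sum.elim νF Sigma.fst
  let d : Fin ℓ₂ := ⟨0, hℓ⟩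
  let ξf : W → W → Fin ℓ₂ := fun a b => match a, b with
    | Sum.inl u, Sum.inl v => ξF (s(u, v))
    | Sum.inl _, Sum.inr _ => d
    | Sum.inr _, Sum.inl _ => d
    | Sum.inr _, Sum.inr _ => d
  have hξf : ∀ a b, ξf a b = ξf b a := by
    rintro (u | u) (v | v)
    · exact congrArg ξF (Sym2.eq_swap)
    · rfl
    · rfl
    · rfl
  let ξG : Sym2 W → Fin ℓ₂ := Sym2.lift ⟨ξf, hξf⟩
  have hξG : ∀ u v : V_F, ξG (s(Sum.inl u, Sum.inl v)) = ξF (s(u, v)) :=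
    fun u v => Sym2.lift_mk ⟨ξf, hξf⟩ (Sum.inl u) (Sum.inl v)
  have hinjG : Set.InjOn ξG G.edgeSet := by
    intro x hx y hy hxy
    induction x using Sym2.ind with
    | _ a b =>
    induction y using Sym2.ind with
    | _ c e =>
    rw [SimpleGraph.mem_edgeSet, SimpleGraph.map_adj] at hx hy
    obtain ⟨u, v, huv, rfl, rfl⟩ := hx
    obtain ⟨u', v', huv', rfl, rfl⟩ := hy
    simp only [Function.Embedding.coeFn_mk] at hxy ⊢
    rw [hξG, hξG] at hxy
    have heq := hF (F.mem_edgeSet.mpr huv) (F.mem_edgeSet.mpr huv') hxy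
    have := congrArg (Sym2.map (Sum.inl : V_F → W)) heq
    simp only [Sym2.map_pair_eq] at this
    exact this
  -- decompose hom counts
  have hCF := homCard_decomp F G νF ξF νG ξG
  have hCH := homCard_decomp H G νH ξH νG ξG
  have hA : Nat.card {ψ' : {v : V_F // ∃ u, F.Adj v u} → W //
      IsColHom (F.comap Subtype.val) (νF ∘ Subtype.val) (ξF ∘ Sym2.map Subtype.val)
        G νG ξG ψ'} =
      Nat.card {ψ' : {w : V_H // ∃ x, H.Adj w x} → W //
      IsColHom (H.comap Subtype.val) (νH ∘ Subtype.val) (ξH ∘ Sym2.map Subtype.val)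
        G νG ξG ψ'} := homCard_congr_source e'' heF heH
  have hApos : 0 < Nat.card {ψ' : {v : V_F // ∃ u, F.Adj v u} → W //
      IsColHom (F.comap Subtype.val) (νF ∘ Subtype.val) (ξF ∘ Sym2.map Subtype.val)
        G νG ξG ψ'} := by
    haveI : Nonempty {ψ' : {v : V_F // ∃ u, F.Adj v u} → W //
        IsColHom (F.comap Subtype.val) (νF ∘ Subtype.val) (ξF ∘ Sym2.map Subtype.val)
          G νG ξG ψ'} := by
      refine ⟨⟨fun v => Sum.inl v.1, ⟨fun u v h => ?_, fun v => rfl, fun u v h => ?_⟩⟩⟩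
      · simp only [SimpleGraph.comap_adj] at h
        exact (SimpleGraph.map_adj _ _ _ _).mpr ⟨u.1, v.1, h, rfl, rfl⟩
      · simp only [SimpleGraph.comap_adj] at h
        rw [hξG]
        simp [Sym2.map_pair_eq]
    exact Nat.card_pos
  -- count colour classes in the target
  have ncard : ∀ t : S₁, Nat.card {x : W // νG x = t} = p t := by
    intro t
    have e1 : {x : W // νG x = t} ≃
        {v : V_F // νF v = t} ⊕ {y : Σ t', Fin (m t') // y.1 = t} := Equiv.subtypeSum
    have e2 : {y : Σ t', Fin (m t') // y.1 = t} ≃ Fin (m t) :=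
      ⟨fun y => Fin.cast (congrArg m y.2) y.1.2, fun i => ⟨⟨t, i⟩, rfl⟩,
        by rintro ⟨⟨t', j⟩, rfl⟩; rfl, fun i => rfl⟩
    rw [Nat.card_congr e1, Nat.card_sum, Nat.card_congr e2]
    have : Nat.card (Fin (m t)) = m t := by simp
    rw [this]
    exact Nat.add_sub_cancel' (hple t)
  letI : Fintype {v : V_F // ¬∃ u, F.Adj v u} := Fintype.ofFinite _
  letI : Fintype {w : V_H // ¬∃ x, H.Adj w x} := Fintype.ofFinite _
  have hpiF : Nat.card ((v : {v : V_F // ¬∃ u, F.Adj v u}) → {x : W // νG x = νF v.val}) =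
      ∏ v : {v : V_F // ¬∃ u, F.Adj v u}, p (νF v.val) := by
    rw [Nat.card_pi]
    exact Finset.prod_congr rfl (fun v _ => ncard (νF v.val))
  have hpiH : Nat.card ((w : {w : V_H // ¬∃ x, H.Adj w x}) → {x : W // νG x = νH w.val}) =
      ∏ w : {w : V_H // ¬∃ x, H.Adj w x}, p (νH w.val) := by
    rw [Nat.card_pi]
    exact Finset.prod_congr rfl (fun w _ => ncard (νH w.val))
  have hprod : (∏ v : {v : V_F // ¬∃ u, F.Adj v u}, p (νF v.val)) ≠
      ∏ w : {w : V_H // ¬∃ x, H.Adj w x}, p (νH w.val) :=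
    prod_primes_ne (fun v : {v : V_F // ¬∃ u, F.Adj v u} => νF v.val)
      (fun w : {w : V_H // ¬∃ x, H.Adj w x} => νH w.val) p hp hpinj s hs
  have hne : Nat.card {φ' : V_F → W // IsColHom F νF ξF G νG ξG φ'} ≠
      Nat.card {φ' : V_H → W // IsColHom H νH ξH G νG ξG φ'} := by
    rw [hCF, hCH, hA, hpiF, hpiH]
    intro heq
    exact hprod (Nat.eq_of_mul_eq_mul_left (hA ▸ hApos) heq)
  exact finalize F νF ξF H νH ξH G νG ξG hinjG hne
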